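/- Let k and ℓ be integers with 2 ≤ k ≤ ℓ and let F_{k,ℓ} be the graph described in the context. Then every total dominating set of F_{k,ℓ} that contains neither u nor v has at least 2(k+ℓ−2) vertices. -/

import Mathlib

/-- Vertices of `F_{k,ℓ}`: triangle vertices `t_{i,j}` as `Sum.inl (i,j)`
(0-indexed, `i : Fin (k+ℓ-2)`, `j : Fin 3`), and `u = Sum.inr false`,
`v = Sum.inr true`. -/
abbrev FklV (k l : ℕ) := (Fin (k + l - 2) × Fin 3) ⊕ Bool

/-- Edge relation of `F_{k,ℓ}`: triangles on each `t_{i,·}`; `u` adjacent to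
`t_{i,1}`, `t_{i,2}` (0-indexed `j ∈ {0,1}`) for all `i` and to `t_{i,3}` for
`i ≥ k` (0-indexed `k-1 ≤ i.val`); `v` adjacent to `t_{i,1}`, `t_{i,2}` for
all `i` and to `t_{i,3}` for `i ≤ k-1` (0-indexed `i.val < k-1`); `u` and `v`
nonadjacent. -/
def FklRel (k l : ℕ) : FklV k l → FklV k l → Prop
  | .inl p, .inl q => p.1 = q.1
  | .inr false, .inl p =>
      p.2.val = 0 ∨ p.2.val = 1 ∨ (k - 1 ≤ p.1.val ∧ p.2.val = 2)
  | .inr true, .inl p =>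
      p.2.val = 0 ∨ p.2.val = 1 ∨ (p.1.val < k - 1 ∧ p.2.val = 2)
  | _, _ => False

/-- The graph `F_{k,ℓ}`. -/
def Fkl (k l : ℕ) : SimpleGraph (FklV k l) := SimpleGraph.fromRel (FklRel k l)

/-- `D` is a total dominating set of `G`. -/
def IsTotalDomSet {V : Type*} (G : SimpleGraph V) (D : Finset V) : Prop :=
  ∀ v : V, ∃ d ∈ D, G.Adj v d

/-- Every total dominating set of `F_{k,ℓ}` containing neither `u` nor `v`
has at least `2(k+ℓ-2)` vertices. -/
theorem stmt17 (k l : ℕ) (hk : 2 ≤ k) (hkl : k ≤ l)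
    (D : Finset (FklV k l)) (hD : IsTotalDomSet (Fkl k l) D)
    (hu : (Sum.inr false : FklV k l) ∉ D)
    (hv : (Sum.inr true : FklV k l) ∉ D) :
    2 * (k + l - 2) ≤ D.card := by
  classical
  -- any vertex in D adjacent to a triangle vertex lies in the same triangle
  have adjlem : ∀ (i : Fin (k + l - 2)) (j : Fin 3) (d : FklV k l), d ∈ D →
      (Fkl k l).Adj (Sum.inl (i, j)) d → ∃ j' : Fin 3, j' ≠ j ∧ d = Sum.inl (i, j') := by
    intro i j d hdD hadj
    obtain ⟨hne, hrel⟩ := hadj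
    match d with
    | .inl p =>
      have hp1 : p.1 = i := by
        rcases hrel with h | h <;> simpa [FklRel] using h.symm ▸ rfl
      refine ⟨p.2, ?_, ?_⟩
      · intro hjj
        apply hne
        simp [← hp1, ← hjj]
      · rw [← hp1]
    | .inr false => exact absurd hdD hu
    | .inr true => exact absurd hdD hv
  have key : ∀ i : Fin (k + l - 2),
      2 ≤ (D.filter (fun x => x.getLeft?.map Prod.fst = some i)).card := by
    intro i
    obtain ⟨d0, hd0D, hd0adj⟩ := hD (Sum.inl (i, 0))
    obtain ⟨j0, hj0, rfl⟩ := adjlem i 0 d0 hd0D hd0adj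
    obtain ⟨d1, hd1D, hd1adj⟩ := hD (Sum.inl (i, j0))
    obtain ⟨j1, hj1, rfl⟩ := adjlem i j0 d1 hd1D hd1adj
    have hsub : ({Sum.inl (i, j0), Sum.inl (i, j1)} : Finset (FklV k l)) ⊆
        D.filter (fun x => x.getLeft?.map Prod.fst = some i) := by
      intro x hx
      simp only [Finset.mem_insert, Finset.mem_singleton] at hx
      rcases hx with rfl | rfl <;> simp [Finset.mem_filter, hd0D, hd1D, Sum.getLeft?]
    have hcard : ({Sum.inl (i, j0), Sum.inl (i, j1)} : Finset (FklV k l)).card = 2 := by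
      rw [Finset.card_insert_of_notMem (by simp [hj1.symm]), Finset.card_singleton]
    calc 2 = ({Sum.inl (i, j0), Sum.inl (i, j1)} : Finset (FklV k l)).card := hcard.symm
    _ ≤ _ := Finset.card_le_card hsub
  have hdisj : ((Finset.univ : Finset (Fin (k + l - 2))) : Set (Fin (k + l - 2))).PairwiseDisjoint
      (fun i => D.filter (fun x => x.getLeft?.map Prod.fst = some i)) := by
    intro a _ b _ hab
    apply Finset.disjoint_left.mpr
    simp only [Finset.mem_filter]
    rintro x ⟨-, hx⟩ ⟨-, hx'⟩
    exact hab (Option.some_injective _ (hx.symm.trans hx'))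
  calc 2 * (k + l - 2) = ∑ i : Fin (k + l - 2), 2 := by
        simp [Finset.sum_const, Nat.mul_comm]
    _ ≤ ∑ i : Fin (k + l - 2),
        (D.filter (fun x => x.getLeft?.map Prod.fst = some i)).card :=
        Finset.sum_le_sum (fun i _ => key i)
    _ = (Finset.univ.biUnion
        (fun i => D.filter (fun x => x.getLeft?.map Prod.fst = some i))).card :=
        (Finset.card_biUnion hdisj).symm
    _ ≤ D.card := Finset.card_le_card (by
        intro x hx
        simp only [Finset.mem_biUnion, Finset.mem_filter] at hx
        obtain ⟨i, _, hxD, _⟩ := hx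
        exact hxD)
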